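/- With the scattering-algebra setup of the context, assume additionally ρ ≠ 0 and ρ̂ ≠ 0. Let D⁽³⁾ be the 2×2 matrix with columns (c, f/ρ̂) and D⁽²⁾ the 2×2 matrix with columns (e/ρ, d). Then D⁽³⁾ = D⁽²⁾·Q₂, where Q₂ = [[1, (κ̂/ρ̂)·E⁻¹],[(κ/ρ)·E, 1 + κκ̂/(ρρ̂)]]. (This is the jump relation of the sectionally defined matrix D(x,t,ζ) across the contour Γ₂.) -/

import Mathlib

/-- The 2×2 complex matrix with columns `p` and `q`. -/
def cols (p q : Fin 2 → ℂ) : Matrix (Fin 2) (Fin 2) ℂ :=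
  Matrix.of fun i => ![p i, q i]

set_option maxHeartbeats 800000 in
/-- jump relation of the sectionally defined matrix `D(x,t,ζ)` across `Γ₂`.
With the scattering-algebra setup, if `ρ ≠ 0` and `ρh ≠ 0`, then `D⁽³⁾ = (c | f/ρh)` and
`D⁽²⁾ = (e/ρ | d)` satisfy `D⁽³⁾ = D⁽²⁾ · Q₂` with
`Q₂ = [[1, (κh/ρh)·E⁻¹],[(κ/ρ)·E, 1 + κ·κh/(ρ·ρh)]]`. -/
theorem stmt_7 (ζ E : ℂ) (hE : E ≠ 0) (a b : Fin 2 → ℂ)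
    (y yh z zh Y Yh Z Zh : ℂ)
    (hdet1 : y * yh + z * zh = 1) (hdet2 : Y * Yh + Z * Zh = 1)
    (c d e f : Fin 2 → ℂ)
    (hc : c = yh • a - (zh * E) • b) (hd : d = (z * E⁻¹) • a + y • b)
    (he : e = Yh • a - (Zh * E) • b) (hf : f = (Z * E⁻¹) • a + Y • b)
    (ρ κ ρh κh : ℂ)
    (hρ : ρ = y * Yh + z * Zh) (hκ : κ = yh * Zh - zh * Yh)
    (hρh : ρh = yh * Y + zh * Z) (hκh : κh = y * Z - z * Y)
    (hρ0 : ρ ≠ 0) (hρh0 : ρh ≠ 0) :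
    cols c (ρh⁻¹ • f) =
      cols (ρ⁻¹ • e) d * !![1, (κh / ρh) * E⁻¹; (κ / ρ) * E, 1 + κ * κh / (ρ * ρh)] := by
  have h1 : ∀ i, ρ * c i = e i + κ * E * d i := by
    intro i
    subst hc hd he hρ hκ
    simp only [Pi.smul_apply, Pi.add_apply, Pi.sub_apply, smul_eq_mul]
    field_simp
    linear_combination (Yh * a i - Zh * E * b i) * hdet1
  have h2 : ∀ i, ρ * E * f i = κh * e i + E * d i := by
    intro i
    subst hd he hf hρ hκh
    simp only [Pi.smul_apply, Pi.add_apply, Pi.sub_apply, smul_eq_mul]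
    field_simp
    linear_combination (z * a i + y * E * b i) * hdet2
  have hone : ρ * ρh + κ * κh = 1 := by
    subst hρ hκ hρh hκh
    linear_combination (Y * Yh + Z * Zh) * hdet1 + hdet2
  ext i j
  fin_cases j <;>
    simp only [cols, Matrix.mul_apply, Fin.sum_univ_two, Matrix.of_apply,
      Matrix.cons_val_zero, Matrix.cons_val_one, Matrix.head_cons, Matrix.cons_val',
      Matrix.empty_val', Matrix.cons_val_fin_one, Matrix.head_fin_const,
      Pi.smul_apply, smul_eq_mul, Fin.isValue, Fin.zero_eta, Fin.mk_one]
  · field_simp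
    linear_combination h1 i
  · field_simp
    linear_combination h2 i - E * d i * hone
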